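/- In the ICW model, each of the error terms R_3 := (1/χ_n)·(1/n)∑_i σ_i·(tanh(t_i*) − tanh((β w_i/E[W_n])·m̃_n^i + h)), R̄_3 := (1/χ_n)·(1/n)∑_i (tanh(t_i*) − tanh((β w_i/E[W_n])·m̃_n^i + h)), R_4 := (1/χ_n)·(1/n)∑_i tanh(t_i*)·(tanh(t_i*) − E_{μ_n}[σ_i]) and R̄_4 := (1/χ_n)·(1/n)∑_i (E_{μ_n}[σ_i] − tanh(t_i*)) satisfies the bound E_{μ_n}[|·|] ≤ (β·√χ̃_n/χ_n)·E_{μ_n}[|X̃_n|]·n^{−1/2} + (β/χ_n)·(E[W_n²]/E[W_n])·n^{−1}. -/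

import Mathlib

open Real BigOperators Finset MeasureTheory Filter ProbabilityTheory Topology

noncomputable section

namespace ICW

/-- The real spin value associated to a Boolean: `true ↦ 1`, `false ↦ -1`. -/
def spin (b : Bool) : ℝ := if b then 1 else -1

/-- `E[W_n^k] = (1/n) ∑_i w_i^k`. -/
def EWk (n : ℕ) (w : Fin n → ℝ) (k : ℕ) : ℝ := (1 / n : ℝ) * ∑ i, (w i) ^ k

/-- `E[W_n] = (1/n) ∑_i w_i`. -/
def EW (n : ℕ) (w : Fin n → ℝ) : ℝ := (1 / n : ℝ) * ∑ i, w i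

/-- The (negative) Hamiltonian of the inhomogeneous Curie–Weiss model. -/
def ham (n : ℕ) (w : Fin n → ℝ) (β h : ℝ) (σ : Fin n → Bool) : ℝ :=
  β / (2 * ∑ i, w i) * (∑ i, w i * spin (σ i)) ^ 2 + h * ∑ i, spin (σ i)

/-- Unnormalized Boltzmann–Gibbs weight. -/
def wt (n : ℕ) (w : Fin n → ℝ) (β h : ℝ) (σ : Fin n → Bool) : ℝ :=
  Real.exp (ham n w β h σ)

/-- Partition function `Z_n`. -/
def Z (n : ℕ) (w : Fin n → ℝ) (β h : ℝ) : ℝ := ∑ σ : Fin n → Bool, wt n w β h σ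

/-- Expectation under the ICW measure `μ_n`. -/
def icwE (n : ℕ) (w : Fin n → ℝ) (β h : ℝ) (f : (Fin n → Bool) → ℝ) : ℝ :=
  (∑ σ : Fin n → Bool, wt n w β h σ * f σ) / Z n w β h

open Classical in
/-- Probability of an event under the ICW measure `μ_n`. -/
def icwP (n : ℕ) (w : Fin n → ℝ) (β h : ℝ) (A : (Fin n → Bool) → Prop) : ℝ :=
  icwE n w β h (fun σ => if A σ then 1 else 0)

/-- Magnetization `m_n`. -/
def mn (n : ℕ) (σ : Fin n → Bool) : ℝ := (1 / n : ℝ) * ∑ i, spin (σ i)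

/-- Weighted magnetization `m̃_n`. -/
def mtil (n : ℕ) (w : Fin n → ℝ) (σ : Fin n → Bool) : ℝ :=
  (1 / n : ℝ) * ∑ i, w i * spin (σ i)

/-- Weighted magnetization leaving out spin `i`, `m̃_n^i`. -/
def mtilI (n : ℕ) (w : Fin n → ℝ) (σ : Fin n → Bool) (i : Fin n) : ℝ :=
  (1 / n : ℝ) * ∑ j ∈ Finset.univ.erase i, w j * spin (σ j)

/-- Argument `√(β/E[W_n])·w_i·x + h`. -/
def arg (n : ℕ) (w : Fin n → ℝ) (β h x : ℝ) (i : Fin n) : ℝ :=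
  Real.sqrt (β / EW n w) * w i * x + h

/-- `G_n(x)`. -/
def Gfun (n : ℕ) (w : Fin n → ℝ) (β h : ℝ) (x : ℝ) : ℝ :=
  x ^ 2 / 2 - (1 / n : ℝ) * ∑ i, Real.log (Real.cosh (arg n w β h x i))

/-- `G_n(x; s)` (with tilted argument `x+s`). -/
def GfunS (n : ℕ) (w : Fin n → ℝ) (β h : ℝ) (x s : ℝ) : ℝ :=
  x ^ 2 / 2 - (1 / n : ℝ) * ∑ i, Real.log (Real.cosh (arg n w β h (x + s) i))

/-- `G_n'(x)`. -/
def Gfun' (n : ℕ) (w : Fin n → ℝ) (β h : ℝ) (x : ℝ) : ℝ :=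
  x - (1 / n : ℝ) * ∑ i, Real.sqrt (β / EW n w) * w i * Real.tanh (arg n w β h x i)

/-- `G_n''(x)`. -/
def Gfun'' (n : ℕ) (w : Fin n → ℝ) (β h : ℝ) (x : ℝ) : ℝ :=
  1 - β / EW n w * ((1 / n : ℝ) * ∑ i, (1 - Real.tanh (arg n w β h x i) ^ 2) * (w i) ^ 2)

/-- `x` has the same sign as `h` (and is `0` when `h = 0`). -/
def SameSign (h x : ℝ) : Prop :=
  (0 < h ∧ 0 < x) ∨ (h < 0 ∧ x < 0) ∨ (h = 0 ∧ x = 0)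

/-- `M_n`, defined from a solution `x` of the fixed point equation. -/
def Mn (n : ℕ) (w : Fin n → ℝ) (β h x : ℝ) : ℝ :=
  (1 / n : ℝ) * ∑ i, Real.tanh (arg n w β h x i)

/-- The susceptibility `χ_n`, defined from a solution `x` of the fixed point equation. -/
def chiN (n : ℕ) (w : Fin n → ℝ) (β h x : ℝ) : ℝ :=
  1 - (1 / n : ℝ) * ∑ i, Real.tanh (arg n w β h x i) ^ 2
    + β / EW n w * ((1 / n : ℝ) * ∑ i, (1 - Real.tanh (arg n w β h x i) ^ 2) * w i) ^ 2
      / Gfun'' n w β h x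

/-- `M̃_n`. -/
def Mtil (n : ℕ) (w : Fin n → ℝ) (β x : ℝ) : ℝ := Real.sqrt (EW n w / β) * x

/-- `χ̃_n`. -/
def chiTil (n : ℕ) (w : Fin n → ℝ) (β h x : ℝ) : ℝ :=
  ((1 / n : ℝ) * ∑ i, (1 - Real.tanh (arg n w β h x i) ^ 2) * (w i) ^ 2) / Gfun'' n w β h x

/-- The normalized magnetization `X_n` (as a function of the configuration),
where `x` is the relevant solution of the fixed point equation. -/
def Xn (n : ℕ) (w : Fin n → ℝ) (β h x : ℝ) (σ : Fin n → Bool) : ℝ :=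
  Real.sqrt n * (mn n σ - Mn n w β h x) / Real.sqrt (chiN n w β h x)

/-- The normalized weighted magnetization `X̃_n`. -/
def Xtil (n : ℕ) (w : Fin n → ℝ) (β h x : ℝ) (σ : Fin n → Bool) : ℝ :=
  Real.sqrt n * (mtil n w σ - Mtil n w β x) / Real.sqrt (chiTil n w β h x)

/-- The standard normal cumulative distribution function. -/
def stdGaussCDF (z : ℝ) : ℝ := ((gaussianReal 0 1) (Set.Iic z)).toReal

/-- Kolmogorov distance between the law of `X` under `μ_n` and the standard normal law. -/
def dK (n : ℕ) (w : Fin n → ℝ) (β h : ℝ) (X : (Fin n → Bool) → ℝ) : ℝ :=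
  ⨆ z : ℝ, |icwP n w β h (fun σ => X σ ≤ z) - stdGaussCDF z|

/-- Weight regularity condition (i): the empirical weight distribution converges weakly to
the law `ν` of `W`, which is a probability measure with `E[W] > 0`. -/
def WeightRegI (w : (n : ℕ) → Fin n → ℝ) (ν : Measure ℝ) : Prop :=
  (∀ n i, 0 < w n i) ∧ IsProbabilityMeasure ν ∧
    (∀ f : BoundedContinuousFunction ℝ ℝ,
      Tendsto (fun n : ℕ => (1 / n : ℝ) * ∑ i, f (w n i)) atTop (𝓝 (∫ x, f x ∂ν))) ∧
    Integrable (fun x => x) ν ∧ 0 < ∫ x, x ∂ν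

/-- Weight regularity condition (ii): `E[W_n²] → E[W²] < ∞`. -/
def WeightRegII (w : (n : ℕ) → Fin n → ℝ) (ν : Measure ℝ) : Prop :=
  Integrable (fun x => x ^ 2) ν ∧
    Tendsto (fun n => EWk n (w n) 2) atTop (𝓝 (∫ x, x ^ 2 ∂ν))

/-- Weight regularity condition (iii): `E[W_n³] → E[W³] < ∞`. -/
def WeightRegIII (w : (n : ℕ) → Fin n → ℝ) (ν : Measure ℝ) : Prop :=
  Integrable (fun x => x ^ 3) ν ∧
    Tendsto (fun n => EWk n (w n) 3) atTop (𝓝 (∫ x, x ^ 3 ∂ν))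

/-- The critical inverse temperature `β_c = E[W]/E[W²]`. -/
def betaC (ν : Measure ℝ) : ℝ := (∫ x, x ∂ν) / (∫ x, x ^ 2 ∂ν)

/-- The uniqueness regime `U`. -/
def Uniq (ν : Measure ℝ) (β h : ℝ) : Prop :=
  (0 ≤ β ∧ h ≠ 0) ∨ (0 < β ∧ β < betaC ν ∧ h = 0)

/-- Probability that spin `i` equals `+1` given the remaining spins. -/
def pPlus (n : ℕ) (w : Fin n → ℝ) (β h : ℝ) (σ : Fin n → Bool) (i : Fin n) : ℝ :=
  wt n w β h (Function.update σ i true) /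
    (wt n w β h (Function.update σ i true) + wt n w β h (Function.update σ i false))

/-- Conditional expectation given `F_n` (the σ-algebra generated by `σ`) of a function of
`(σ, I, σ'_I)`, where `I` is uniform on `[n]` and `σ'_I` is resampled from the conditional
distribution of the `I`-th spin given the others. -/
def condAvg (n : ℕ) (w : Fin n → ℝ) (β h : ℝ)
    (f : (Fin n → Bool) → Fin n → Bool → ℝ) (σ : Fin n → Bool) : ℝ :=
  (1 / n : ℝ) * ∑ i, (pPlus n w β h σ i * f σ i true + (1 - pPlus n w β h σ i) * f σ i false)

/-- The increment `X_n − X'_n` as a function of `(σ, I, σ'_I)`. -/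
def XnD (n : ℕ) (w : Fin n → ℝ) (β h x : ℝ) (σ : Fin n → Bool) (i : Fin n) (b : Bool) : ℝ :=
  (spin (σ i) - spin b) / (Real.sqrt n * Real.sqrt (chiN n w β h x))

/-- The increment `X̃_n − X̃'_n` as a function of `(σ, I, σ'_I)`. -/
def XtilD (n : ℕ) (w : Fin n → ℝ) (β h x : ℝ) (σ : Fin n → Bool) (i : Fin n) (b : Bool) : ℝ :=
  w i * (spin (σ i) - spin b) / (Real.sqrt n * Real.sqrt (chiTil n w β h x))

/-- The constant `c` in the regression equation. -/
def cconst (n : ℕ) (w : Fin n → ℝ) (β h x : ℝ) : ℝ :=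
  Real.sqrt (chiTil n w β h x) / Real.sqrt (chiN n w β h x) * (β / EW n w) *
    ((1 / n : ℝ) * ∑ i, (1 - Real.tanh (arg n w β h x i) ^ 2) * w i)

end ICW

namespace ICW

/-- Error term `R_3`. -/
def R3 (n : ℕ) (w : Fin n → ℝ) (β h x : ℝ) (σ : Fin n → Bool) : ℝ :=
  1 / chiN n w β h x * ((1 / n : ℝ) * ∑ i, spin (σ i) *
    (Real.tanh (arg n w β h x i) - Real.tanh (β * w i / EW n w * mtilI n w σ i + h)))

/-- Error term `R̄_3`. -/
def Rbar3 (n : ℕ) (w : Fin n → ℝ) (β h x : ℝ) (σ : Fin n → Bool) : ℝ :=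
  1 / chiN n w β h x * ((1 / n : ℝ) * ∑ i,
    (Real.tanh (arg n w β h x i) - Real.tanh (β * w i / EW n w * mtilI n w σ i + h)))

/-- Error term `R_4`. -/
def R4 (n : ℕ) (w : Fin n → ℝ) (β h x : ℝ) : ℝ :=
  1 / chiN n w β h x * ((1 / n : ℝ) * ∑ i, Real.tanh (arg n w β h x i) *
    (Real.tanh (arg n w β h x i) - icwE n w β h (fun τ => spin (τ i))))

/-- Error term `R̄_4`. -/
def Rbar4 (n : ℕ) (w : Fin n → ℝ) (β h x : ℝ) : ℝ :=
  1 / chiN n w β h x * ((1 / n : ℝ) * ∑ i,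
    (icwE n w β h (fun τ => spin (τ i)) - Real.tanh (arg n w β h x i)))
/-! ### Auxiliary lemmas -/

lemma tanh_hasDerivAt (x : ℝ) : HasDerivAt Real.tanh (1 / Real.cosh x ^ 2) x := by
  have h := (Real.hasDerivAt_sinh x).div (Real.hasDerivAt_cosh x) (Real.cosh_pos x).ne'
  have heq : (fun y => Real.sinh y / Real.cosh y) = Real.tanh := by
    funext y; rw [Real.tanh_eq_sinh_div_cosh]
  rw [show (Real.sinh / Real.cosh) = fun y => Real.sinh y / Real.cosh y from rfl, heq] at h
  refine h.congr_deriv ?_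
  have := Real.cosh_sq_sub_sinh_sq x
  rw [div_left_inj' (pow_ne_zero 2 (Real.cosh_pos x).ne')]
  nlinarith [Real.cosh_pos x]

lemma tanh_lipschitz (a b : ℝ) : |Real.tanh a - Real.tanh b| ≤ |a - b| := by
  have hl : LipschitzWith 1 Real.tanh := by
    apply lipschitzWith_of_nnnorm_deriv_le (fun x => (tanh_hasDerivAt x).differentiableAt)
    intro x
    rw [(tanh_hasDerivAt x).deriv, ← NNReal.coe_le_coe]
    simp only [coe_nnnorm, Real.norm_eq_abs, NNReal.coe_one]
    rw [abs_of_nonneg (by positivity), div_le_one (by positivity)]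
    nlinarith [Real.one_le_cosh x]
  have := hl.dist_le_mul a b
  simpa [Real.dist_eq] using this

lemma abs_tanh_lt_one (x : ℝ) : |Real.tanh x| < 1 := by
  rw [Real.tanh_eq_sinh_div_cosh, abs_div, abs_of_pos (Real.cosh_pos x),
    div_lt_one (Real.cosh_pos x), abs_lt]
  constructor
  · have := Real.sinh_lt_cosh (-x); rw [Real.sinh_neg, Real.cosh_neg] at this; linarith
  · exact Real.sinh_lt_cosh x

lemma tanh_exp_identity (c : ℝ) : Real.exp (2 * c) * (1 - Real.tanh c) = 1 + Real.tanh c := by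
  rw [Real.tanh_eq_sinh_div_cosh, Real.sinh_eq, Real.cosh_eq]
  have h1 : Real.exp c * Real.exp (-c) = 1 := by rw [← Real.exp_add]; simp
  have h2 : Real.exp (2 * c) = Real.exp c * Real.exp c := by rw [← Real.exp_add]; ring_nf
  have h3 : Real.exp c + Real.exp (-c) ≠ 0 := by positivity
  rw [h2]
  field_simp
  linear_combination 2 * Real.exp c * h1

lemma abs_spin (b : Bool) : |spin b| = 1 := by cases b <;> simp [spin]

lemma spin_not (b : Bool) : spin (!b) = - spin b := by cases b <;> simp [spin]

section icwEBasics

variable (n : ℕ) (w : Fin n → ℝ) (β h : ℝ)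

lemma wt_pos (σ : Fin n → Bool) : 0 < wt n w β h σ := Real.exp_pos _

lemma Z_pos : 0 < Z n w β h :=
  Finset.sum_pos (fun σ _ => wt_pos n w β h σ) Finset.univ_nonempty

lemma icwE_mono {f g : (Fin n → Bool) → ℝ} (hfg : ∀ σ, f σ ≤ g σ) :
    icwE n w β h f ≤ icwE n w β h g := by
  unfold icwE
  refine (div_le_div_iff_of_pos_right (Z_pos n w β h)).mpr ?_
  exact Finset.sum_le_sum fun σ _ => mul_le_mul_of_nonneg_left (hfg σ) (wt_pos n w β h σ).le

lemma icwE_const (a : ℝ) : icwE n w β h (fun _ => a) = a := by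
  unfold icwE
  rw [← Finset.sum_mul, show (∑ σ : Fin n → Bool, wt n w β h σ) = Z n w β h from rfl,
    mul_comm, mul_div_assoc, div_self (Z_pos n w β h).ne', mul_one]

lemma icwE_sum {ι : Type*} (s : Finset ι) (g : ι → (Fin n → Bool) → ℝ) :
    icwE n w β h (fun σ => ∑ i ∈ s, g i σ) = ∑ i ∈ s, icwE n w β h (g i) := by
  unfold icwE
  rw [← Finset.sum_div]
  congr 1
  simp_rw [Finset.mul_sum]
  rw [Finset.sum_comm]

lemma icwE_smul (c : ℝ) (f : (Fin n → Bool) → ℝ) :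
    icwE n w β h (fun σ => c * f σ) = c * icwE n w β h f := by
  unfold icwE
  have : ∀ σ, wt n w β h σ * (c * f σ) = c * (wt n w β h σ * f σ) := fun σ => by ring
  simp_rw [this, ← Finset.mul_sum, mul_div_assoc]

lemma icwE_sub (f g : (Fin n → Bool) → ℝ) :
    icwE n w β h (fun σ => f σ - g σ) = icwE n w β h f - icwE n w β h g := by
  unfold icwE
  rw [div_sub_div_same]
  congr 1
  simp_rw [mul_sub, Finset.sum_sub_distrib]

lemma abs_icwE_le (f : (Fin n → Bool) → ℝ) :
    |icwE n w β h f| ≤ icwE n w β h (fun σ => |f σ|) := by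
  unfold icwE
  rw [abs_div, abs_of_pos (Z_pos n w β h)]
  refine (div_le_div_iff_of_pos_right (Z_pos n w β h)).mpr ?_
  refine (Finset.abs_sum_le_sum_abs _ _).trans ?_
  apply le_of_eq
  exact Finset.sum_congr rfl fun σ _ => by
    rw [abs_mul, abs_of_pos (wt_pos n w β h σ)]

end icwEBasics

section MoreIcwE

variable (n : ℕ) (w : Fin n → ℝ) (β h : ℝ)

lemma icwE_add (f g : (Fin n → Bool) → ℝ) :
    icwE n w β h (fun σ => f σ + g σ) = icwE n w β h f + icwE n w β h g := by
  unfold icwE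
  rw [← add_div]
  congr 1
  simp_rw [mul_add, Finset.sum_add_distrib]

lemma icwE_affine (A B : ℝ) (f : (Fin n → Bool) → ℝ) :
    icwE n w β h (fun σ => A * f σ + B) = A * icwE n w β h f + B := by
  rw [icwE_add n w β h (fun σ => A * f σ) (fun _ => B), icwE_smul, icwE_const]

end MoreIcwE
section Main

variable (n : ℕ) (w : Fin n → ℝ) (β h x : ℝ)

lemma sum_w_pos (hn : 0 < n) (hw : ∀ i, 0 < w i) : 0 < ∑ i, w i := by
  have : Nonempty (Fin n) := Fin.pos_iff_nonempty.mp hn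
  exact Finset.sum_pos (fun i _ => hw i) Finset.univ_nonempty

lemma EW_pos (hn : 0 < n) (hw : ∀ i, 0 < w i) : 0 < EW n w := by
  have h1 : (0:ℝ) < n := by exact_mod_cast hn
  have h2 : (0:ℝ) < 1 / n := one_div_pos.mpr h1
  exact mul_pos h2 (sum_w_pos n w hn hw)

lemma tanh_sq_lt_one (y : ℝ) : Real.tanh y ^ 2 < 1 := by
  have h1 := abs_tanh_lt_one y
  have h2 : Real.tanh y ^ 2 = |Real.tanh y| ^ 2 := (sq_abs _).symm
  nlinarith [abs_nonneg (Real.tanh y)]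

lemma chiTil_pos (hn : 0 < n) (hw : ∀ i, 0 < w i) (hG'' : 0 < Gfun'' n w β h x) :
    0 < chiTil n w β h x := by
  have : Nonempty (Fin n) := Fin.pos_iff_nonempty.mp hn
  have h1 : (0:ℝ) < n := by exact_mod_cast hn
  apply div_pos _ hG''
  have h2 : (0:ℝ) < 1 / n := one_div_pos.mpr h1
  apply mul_pos h2
  apply Finset.sum_pos (fun i _ => ?_) Finset.univ_nonempty
  exact mul_pos (by linarith [tanh_sq_lt_one (arg n w β h x i)]) (pow_pos (hw i) 2)

lemma avg_tanh_sq_lt_one (hn : 0 < n) :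
    (1 / n : ℝ) * ∑ i, Real.tanh (arg n w β h x i) ^ 2 < 1 := by
  have : Nonempty (Fin n) := Fin.pos_iff_nonempty.mp hn
  have h1 : (0:ℝ) < n := by exact_mod_cast hn
  have h2 : ∑ i, Real.tanh (arg n w β h x i) ^ 2 < ∑ _i : Fin n, (1:ℝ) :=
    Finset.sum_lt_sum_of_nonempty Finset.univ_nonempty
      (fun i _ => tanh_sq_lt_one (arg n w β h x i))
  rw [Finset.sum_const, Finset.card_univ, Fintype.card_fin, nsmul_eq_mul, mul_one] at h2
  rw [one_div, inv_mul_lt_iff₀ h1, mul_one]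
  exact h2

lemma chiN_pos (hn : 0 < n) (hw : ∀ i, 0 < w i) (hβ : 0 < β)
    (hG'' : 0 < Gfun'' n w β h x) : 0 < chiN n w β h x := by
  have h1 := avg_tanh_sq_lt_one n w β h x hn
  have h2 := EW_pos n w hn hw
  have h3 : 0 ≤ β / EW n w *
      ((1 / n : ℝ) * ∑ i, (1 - Real.tanh (arg n w β h x i) ^ 2) * w i) ^ 2
        / Gfun'' n w β h x := by positivity
  unfold chiN
  linarith

lemma arg_eq (hn : 0 < n) (hw : ∀ i, 0 < w i) (hβ : 0 < β) (i : Fin n) :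
    arg n w β h x i = β * w i / EW n w * Mtil n w β x + h := by
  have hEW := EW_pos n w hn hw
  have h1 : Real.sqrt (β / EW n w) * Real.sqrt (EW n w / β) = 1 := by
    rw [← Real.sqrt_mul (by positivity),
      show β / EW n w * (EW n w / β) = 1 by field_simp]
    exact Real.sqrt_one
  have h2 : Real.sqrt (β / EW n w) ^ 2 = β / EW n w := Real.sq_sqrt (by positivity)
  have key0 : β / EW n w * Real.sqrt (EW n w / β) = Real.sqrt (β / EW n w) := by
    conv_lhs => rw [← h2]
    rw [pow_two, mul_assoc, h1, mul_one]
  unfold arg Mtil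
  rw [← key0]
  ring

lemma mtil_decomp (σ : Fin n → Bool) (i : Fin n) :
    mtil n w σ = mtilI n w σ i + w i * spin (σ i) / n := by
  unfold mtil mtilI
  rw [← Finset.add_sum_erase _ _ (Finset.mem_univ i)]
  ring

lemma tanh_diff_bound (hn : 0 < n) (hw : ∀ i, 0 < w i) (hβ : 0 < β)
    (σ : Fin n → Bool) (i : Fin n) :
    |Real.tanh (arg n w β h x i) - Real.tanh (β * w i / EW n w * mtilI n w σ i + h)|
      ≤ β * w i / EW n w * (|mtil n w σ - Mtil n w β x| + w i / n) := by
  have hEW := EW_pos n w hn hw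
  have h1 : (0:ℝ) < n := by exact_mod_cast hn
  refine (tanh_lipschitz _ _).trans ?_
  rw [arg_eq n w β h x hn hw hβ i,
    show β * w i / EW n w * Mtil n w β x + h - (β * w i / EW n w * mtilI n w σ i + h)
      = β * w i / EW n w * (Mtil n w β x - mtilI n w σ i) by ring,
    abs_mul, abs_of_nonneg (le_of_lt (div_pos (mul_pos hβ (hw i)) hEW))]
  apply mul_le_mul_of_nonneg_left _ (le_of_lt (div_pos (mul_pos hβ (hw i)) hEW))
  rw [show Mtil n w β x - mtilI n w σ i
      = -(mtil n w σ - Mtil n w β x) + w i * spin (σ i) / n by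
    rw [mtil_decomp n w σ i]; ring]
  refine (abs_add_le _ _).trans ?_
  rw [abs_neg, abs_div, abs_mul, abs_spin, mul_one, abs_of_pos (hw i), abs_of_pos h1]

lemma sum_bound_eq (σ : Fin n → Bool) (hn : 0 < n) (hw : ∀ i, 0 < w i) :
    (1 / n : ℝ) * ∑ i, β * w i / EW n w * (|mtil n w σ - Mtil n w β x| + w i / n)
      = β * |mtil n w σ - Mtil n w β x| + β / EW n w * EWk n w 2 / n := by
  have hEW := EW_pos n w hn hw
  have h1 : (0:ℝ) < n := by exact_mod_cast hn
  set D := |mtil n w σ - Mtil n w β x| with hD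
  have hterm : ∀ i, β * w i / EW n w * (D + w i / n)
      = β * D / EW n w * w i + β / (EW n w * n) * (w i ^ 2) := fun i => by ring
  simp_rw [hterm, Finset.sum_add_distrib, ← Finset.mul_sum]
  rw [mul_add]
  have hEWdef : (∑ i, w i) = n * EW n w := by unfold EW; field_simp
  have hEWk : (∑ i, (w i)^2) = n * EWk n w 2 := by unfold EWk; field_simp
  rw [hEWdef, hEWk]
  field_simp

end Main
section Flip

variable (n : ℕ) (w : Fin n → ℝ) (β h : ℝ)

lemma exp_identity' (cv : ℝ) (s : ℝ) (hs : s = 1 ∨ s = -1) :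
    s + Real.tanh cv = Real.exp (2 * s * cv) * (s - Real.tanh cv) := by
  rcases hs with rfl | rfl
  · rw [show (2:ℝ) * 1 * cv = 2 * cv by ring]
    linear_combination - tanh_exp_identity cv
  · rw [show (2:ℝ) * (-1) * cv = -(2 * cv) by ring, Real.exp_neg]
    have hE : Real.exp (2 * cv) ≠ 0 := (Real.exp_pos _).ne'
    have hid := tanh_exp_identity cv
    field_simp
    linear_combination - hid

lemma flip_sum (hn : 0 < n) (hw : ∀ i, 0 < w i) (i : Fin n) :
    ∑ σ : Fin n → Bool, wt n w β h σ *
        (spin (σ i) - Real.tanh (β * w i / EW n w * mtilI n w σ i + h)) = 0 := by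
  classical
  have : Nonempty (Fin n) := Fin.pos_iff_nonempty.mp hn
  have hn' : (0:ℝ) < n := by exact_mod_cast hn
  have hℓ : (0:ℝ) < ∑ j, w j := sum_w_pos n w hn hw
  set c : (Fin n → Bool) → ℝ := fun σ => β * w i / EW n w * mtilI n w σ i + h with hc
  set F : (Fin n → Bool) → ℝ :=
    fun σ => wt n w β h σ * (spin (σ i) - Real.tanh (c σ)) with hF
  set T : (Fin n → Bool) → (Fin n → Bool) := fun σ => Function.update σ i (!(σ i)) with hT
  have hTi : ∀ σ, T σ i = !(σ i) := fun σ => Function.update_self ..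
  have hTj : ∀ σ (j : Fin n), j ≠ i → T σ j = σ j := fun σ j hj =>
    Function.update_of_ne hj _ _
  have hinv : Function.Involutive T := by
    intro σ; funext j
    by_cases hji : j = i
    · subst hji; simp [hT, Function.update_self]
    · simp [hT, Function.update_of_ne hji]
  have hborder : ∀ σ, ∑ j ∈ Finset.univ.erase i, w j * spin (T σ j)
      = ∑ j ∈ Finset.univ.erase i, w j * spin (σ j) :=
    fun σ => Finset.sum_congr rfl fun j hj => by
      rw [hTj σ j (Finset.ne_of_mem_erase hj)]
  have hborder2 : ∀ σ, ∑ j ∈ Finset.univ.erase i, spin (T σ j)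
      = ∑ j ∈ Finset.univ.erase i, spin (σ j) :=
    fun σ => Finset.sum_congr rfl fun j hj => by
      rw [hTj σ j (Finset.ne_of_mem_erase hj)]
  have hcT : ∀ σ, c (T σ) = c σ := by
    intro σ
    simp only [hc]
    unfold mtilI
    rw [hborder σ]
  have hsplit : ∀ (τ : Fin n → Bool), (∑ j, w j * spin (τ j))
      = w i * spin (τ i) + ∑ j ∈ Finset.univ.erase i, w j * spin (τ j) :=
    fun τ => (Finset.add_sum_erase _ _ (Finset.mem_univ i)).symm
  have hsplit2 : ∀ (τ : Fin n → Bool), (∑ j, spin (τ j))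
      = spin (τ i) + ∑ j ∈ Finset.univ.erase i, spin (τ j) :=
    fun τ => (Finset.add_sum_erase _ _ (Finset.mem_univ i)).symm
  have hham : ∀ σ, ham n w β h σ = ham n w β h (T σ) + 2 * spin (σ i) * c σ := by
    intro σ
    unfold ham
    rw [hsplit σ, hsplit (T σ), hsplit2 σ, hsplit2 (T σ), hTi, spin_not,
      hborder σ, hborder2 σ]
    simp only [hc]
    unfold mtilI EW
    field_simp
    ring
  have hwt : ∀ σ, wt n w β h σ = wt n w β h (T σ) * Real.exp (2 * spin (σ i) * c σ) := by
    intro σ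
    unfold wt
    rw [hham σ, Real.exp_add]
  have key : ∀ σ, F (T σ) = - F σ := by
    intro σ
    simp only [hF]
    rw [hTi, spin_not, hcT, hwt σ]
    have hs : spin (σ i) = 1 ∨ spin (σ i) = -1 := by cases σ i <;> simp [spin]
    have hid := exp_identity' (c σ) (spin (σ i)) hs
    set W := wt n w β h (T σ)
    set s := spin (σ i)
    set t := Real.tanh (c σ)
    set E := Real.exp (2 * s * c σ)
    linear_combination (-W) * hid
  have hsum : ∑ σ, F (T σ) = ∑ σ, F σ :=
    Fintype.sum_bijective T hinv.bijective _ F (fun σ => rfl)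
  have : ∑ σ, F σ = - ∑ σ, F σ := by
    calc ∑ σ, F σ = ∑ σ, F (T σ) := hsum.symm
    _ = ∑ σ, - F σ := Finset.sum_congr rfl fun σ _ => key σ
    _ = - ∑ σ, F σ := by rw [Finset.sum_neg_distrib]
  have hzero : ∑ σ, F σ = 0 := by linarith
  exact hzero

end Flip
/-- **Bounds on the error terms `R_3`, `R̄_3`, `R_4`, `R̄_4`**: each has expected absolute
value at most `(β·√χ̃_n/χ_n)·E[|X̃_n|]·n^{−1/2} + (β/χ_n)·(E[W_n²]/E[W_n])·n^{−1}`. -/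
theorem R3_R4_bounds (n : ℕ) (hn : 0 < n) (w : Fin n → ℝ) (hw : ∀ i, 0 < w i)
    (β h : ℝ) (hβ : 0 < β) (x : ℝ) (hx : Gfun' n w β h x = 0) (hsign : SameSign h x)
    (hG'' : 0 < Gfun'' n w β h x) :
    icwE n w β h (fun σ => |R3 n w β h x σ|)
        ≤ β * Real.sqrt (chiTil n w β h x) / chiN n w β h x *
            icwE n w β h (fun σ => |Xtil n w β h x σ|) / Real.sqrt n
          + β / chiN n w β h x * (EWk n w 2 / EW n w) / n ∧
    icwE n w β h (fun σ => |Rbar3 n w β h x σ|)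
        ≤ β * Real.sqrt (chiTil n w β h x) / chiN n w β h x *
            icwE n w β h (fun σ => |Xtil n w β h x σ|) / Real.sqrt n
          + β / chiN n w β h x * (EWk n w 2 / EW n w) / n ∧
    icwE n w β h (fun _ => |R4 n w β h x|)
        ≤ β * Real.sqrt (chiTil n w β h x) / chiN n w β h x *
            icwE n w β h (fun σ => |Xtil n w β h x σ|) / Real.sqrt n
          + β / chiN n w β h x * (EWk n w 2 / EW n w) / n ∧
    icwE n w β h (fun _ => |Rbar4 n w β h x|)
        ≤ β * Real.sqrt (chiTil n w β h x) / chiN n w β h x *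
            icwE n w β h (fun σ => |Xtil n w β h x σ|) / Real.sqrt n
          + β / chiN n w β h x * (EWk n w 2 / EW n w) / n := by
  have hNE : Nonempty (Fin n) := Fin.pos_iff_nonempty.mp hn
  have hn' : (0:ℝ) < n := by exact_mod_cast hn
  have hEW := EW_pos n w hn hw
  have hχ := chiN_pos n w β h x hn hw hβ hG''
  have hct := chiTil_pos n w β h x hn hw hG''
  have hsn : (0:ℝ) < Real.sqrt n := Real.sqrt_pos.mpr hn'
  have hsct : 0 < Real.sqrt (chiTil n w β h x) := Real.sqrt_pos.mpr hct
  -- |m̃ - M̃| in terms of |X̃|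
  have habs : ∀ σ, |mtil n w σ - Mtil n w β x|
      = Real.sqrt (chiTil n w β h x) * |Xtil n w β h x σ| / Real.sqrt n := by
    intro σ
    unfold Xtil
    rw [abs_div, abs_mul, abs_of_pos hsn, abs_of_pos hsct]
    field_simp
  -- the master bounding function and its expectation
  have hPeq : icwE n w β h (fun σ => 1 / chiN n w β h x * ((1 / n : ℝ) *
        ∑ i, β * w i / EW n w * (|mtil n w σ - Mtil n w β x| + w i / n)))
      = β * Real.sqrt (chiTil n w β h x) / chiN n w β h x *
          icwE n w β h (fun σ => |Xtil n w β h x σ|) / Real.sqrt n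
        + β / chiN n w β h x * (EWk n w 2 / EW n w) / n := by
    have h1 : (fun σ => 1 / chiN n w β h x * ((1 / n : ℝ) *
          ∑ i, β * w i / EW n w * (|mtil n w σ - Mtil n w β x| + w i / n)))
        = fun σ => (1 / chiN n w β h x *
              (β * Real.sqrt (chiTil n w β h x) / Real.sqrt n)) * |Xtil n w β h x σ|
            + 1 / chiN n w β h x * (β / EW n w * EWk n w 2 / n) := by
      funext σ
      rw [sum_bound_eq (σ := σ) (hn := hn) (hw := hw), habs σ]
      ring
    rw [h1, icwE_affine]
    ring
  -- pointwise bounds for R3 and R̄3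
  have hR3 : ∀ σ, |R3 n w β h x σ| ≤ 1 / chiN n w β h x * ((1 / n : ℝ) *
      ∑ i, β * w i / EW n w * (|mtil n w σ - Mtil n w β x| + w i / n)) := by
    intro σ
    unfold R3
    rw [abs_mul, abs_of_pos (one_div_pos.mpr hχ)]
    apply mul_le_mul_of_nonneg_left _ (le_of_lt (one_div_pos.mpr hχ))
    rw [abs_mul, abs_of_pos (one_div_pos.mpr hn')]
    apply mul_le_mul_of_nonneg_left _ (le_of_lt (one_div_pos.mpr hn'))
    refine (Finset.abs_sum_le_sum_abs _ _).trans (Finset.sum_le_sum fun i _ => ?_)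
    rw [abs_mul, abs_spin, one_mul]
    exact tanh_diff_bound n w β h x hn hw hβ σ i
  have hRbar3 : ∀ σ, |Rbar3 n w β h x σ| ≤ 1 / chiN n w β h x * ((1 / n : ℝ) *
      ∑ i, β * w i / EW n w * (|mtil n w σ - Mtil n w β x| + w i / n)) := by
    intro σ
    unfold Rbar3
    rw [abs_mul, abs_of_pos (one_div_pos.mpr hχ)]
    apply mul_le_mul_of_nonneg_left _ (le_of_lt (one_div_pos.mpr hχ))
    rw [abs_mul, abs_of_pos (one_div_pos.mpr hn')]
    apply mul_le_mul_of_nonneg_left _ (le_of_lt (one_div_pos.mpr hn'))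
    refine (Finset.abs_sum_le_sum_abs _ _).trans (Finset.sum_le_sum fun i _ => ?_)
    exact tanh_diff_bound n w β h x hn hw hβ σ i
  -- identity E[σ_i] = E[tanh(...)]
  have hEtanh : ∀ i : Fin n, icwE n w β h (fun τ => spin (τ i))
      = icwE n w β h (fun τ => Real.tanh (β * w i / EW n w * mtilI n w τ i + h)) := by
    intro i
    have h0 : icwE n w β h (fun τ => spin (τ i)
        - Real.tanh (β * w i / EW n w * mtilI n w τ i + h)) = 0 := by
      unfold icwE
      rw [flip_sum (hn := hn) (hw := hw) (i := i), zero_div]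
    rw [icwE_sub] at h0
    linarith
  have hdiff : ∀ i : Fin n, |Real.tanh (arg n w β h x i)
        - icwE n w β h (fun τ => spin (τ i))|
      ≤ icwE n w β h (fun σ => β * w i / EW n w *
          (|mtil n w σ - Mtil n w β x| + w i / n)) := by
    intro i
    rw [hEtanh i,
      show Real.tanh (arg n w β h x i) - icwE n w β h
            (fun τ => Real.tanh (β * w i / EW n w * mtilI n w τ i + h))
          = icwE n w β h (fun τ => Real.tanh (arg n w β h x i)
              - Real.tanh (β * w i / EW n w * mtilI n w τ i + h)) by
        rw [icwE_sub, icwE_const]]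
    refine (abs_icwE_le n w β h _).trans ?_
    exact icwE_mono n w β h fun σ =>
      tanh_diff_bound n w β h x hn hw hβ σ i
  -- expectation of the master bound, summed form
  have hsumE : icwE n w β h (fun σ => 1 / chiN n w β h x * ((1 / n : ℝ) *
        ∑ i, β * w i / EW n w * (|mtil n w σ - Mtil n w β x| + w i / n)))
      = 1 / chiN n w β h x * ((1 / n : ℝ) * ∑ i, icwE n w β h
          (fun σ => β * w i / EW n w * (|mtil n w σ - Mtil n w β x| + w i / n))) := by
    rw [icwE_smul n w β h (1 / chiN n w β h x), icwE_smul n w β h ((1 / n : ℝ)),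
      icwE_sum]
  -- bound for R4
  have hR4 : |R4 n w β h x| ≤ icwE n w β h (fun σ => 1 / chiN n w β h x * ((1 / n : ℝ) *
      ∑ i, β * w i / EW n w * (|mtil n w σ - Mtil n w β x| + w i / n))) := by
    rw [hsumE]
    unfold R4
    rw [abs_mul, abs_of_pos (one_div_pos.mpr hχ)]
    apply mul_le_mul_of_nonneg_left _ (le_of_lt (one_div_pos.mpr hχ))
    rw [abs_mul, abs_of_pos (one_div_pos.mpr hn')]
    apply mul_le_mul_of_nonneg_left _ (le_of_lt (one_div_pos.mpr hn'))
    refine (Finset.abs_sum_le_sum_abs _ _).trans (Finset.sum_le_sum fun i _ => ?_)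
    rw [abs_mul]
    calc |Real.tanh (arg n w β h x i)| *
          |Real.tanh (arg n w β h x i) - icwE n w β h (fun τ => spin (τ i))|
        ≤ 1 * |Real.tanh (arg n w β h x i) - icwE n w β h (fun τ => spin (τ i))| :=
          mul_le_mul_of_nonneg_right (abs_tanh_lt_one _).le (abs_nonneg _)
      _ = |Real.tanh (arg n w β h x i) - icwE n w β h (fun τ => spin (τ i))| := one_mul _
      _ ≤ _ := hdiff i
  -- bound for R̄4
  have hRbar4 : |Rbar4 n w β h x| ≤ icwE n w β h (fun σ => 1 / chiN n w β h x *
      ((1 / n : ℝ) *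
      ∑ i, β * w i / EW n w * (|mtil n w σ - Mtil n w β x| + w i / n))) := by
    rw [hsumE]
    unfold Rbar4
    rw [abs_mul, abs_of_pos (one_div_pos.mpr hχ)]
    apply mul_le_mul_of_nonneg_left _ (le_of_lt (one_div_pos.mpr hχ))
    rw [abs_mul, abs_of_pos (one_div_pos.mpr hn')]
    apply mul_le_mul_of_nonneg_left _ (le_of_lt (one_div_pos.mpr hn'))
    refine (Finset.abs_sum_le_sum_abs _ _).trans (Finset.sum_le_sum fun i _ => ?_)
    rw [abs_sub_comm]
    exact hdiff i
  refine ⟨?_, ?_, ?_, ?_⟩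
  · exact (icwE_mono n w β h hR3).trans hPeq.le
  · exact (icwE_mono n w β h hRbar3).trans hPeq.le
  · calc icwE n w β h (fun _ => |R4 n w β h x|) = |R4 n w β h x| := icwE_const n w β h _
      _ ≤ _ := hR4
      _ = _ := hPeq
  · calc icwE n w β h (fun _ => |Rbar4 n w β h x|) = |Rbar4 n w β h x| := icwE_const n w β h _
      _ ≤ _ := hRbar4
      _ = _ := hPeq

end ICW
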